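/- For each fixed n ≥ 1, the Abel sum of Σ_{k=0}^{∞} (-1)^k c_n^{(k)} equals 1/(n+1): that is, lim_{z→1⁻} Σ_{k=0}^{∞} (-1)^k c_n^{(k)} z^k = 1/(n+1). -/

import Mathlib

open Filter

/-- Roman harmonic number `c_n^{(k)}` as a real number. -/
noncomputable def romanHarmonic (n k : ℕ) : ℝ :=
  ∑ j ∈ Finset.Icc 1 n, (-1 : ℝ) ^ (j - 1) * (n.choose j) / (j : ℝ) ^ k

open Finset

lemma alt_real {m : ℕ} (hm : m ≠ 0) :
    ∑ i ∈ range (m + 1), (-1 : ℝ) ^ i * m.choose i = 0 := by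
  have h := Int.alternating_sum_range_choose_of_ne hm
  have : ((∑ i ∈ range (m + 1), ((-1) ^ i * m.choose i : ℤ) : ℤ) : ℝ) = 0 := by
    rw [h]; norm_num
  push_cast at this
  exact this

lemma alt_shift {m : ℕ} (hm : m ≠ 0) :
    ∑ i ∈ range m, (-1 : ℝ) ^ i * m.choose (i + 1) = 1 := by
  have h := alt_real hm
  rw [Finset.sum_range_succ'] at h
  have e : ∀ i ∈ range m, (-1 : ℝ) ^ (i + 1) * m.choose (i + 1)
      = -((-1 : ℝ) ^ i * m.choose (i + 1)) := fun i _ => by ring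
  rw [Finset.sum_congr rfl e, Finset.sum_neg_distrib] at h
  simp only [pow_zero, Nat.choose_zero_right, Nat.cast_one, one_mul] at h
  linarith

lemma alt_shift2 (m : ℕ) :
    ∑ i ∈ range m, (-1 : ℝ) ^ i * (m + 1).choose (i + 2) = m := by
  have h := alt_shift (m := m + 1) (Nat.succ_ne_zero m)
  rw [Finset.sum_range_succ'] at h
  have e : ∀ i ∈ range m, (-1 : ℝ) ^ (i + 1) * (m + 1).choose (i + 1 + 1)
      = -((-1 : ℝ) ^ i * (m + 1).choose (i + 2)) := fun i _ => by ring
  rw [Finset.sum_congr rfl e, Finset.sum_neg_distrib] at h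
  simp only [zero_add, pow_zero, Nat.choose_one_right, one_mul, Nat.cast_add,
    Nat.cast_one] at h
  linarith

lemma key_sum (n : ℕ) (hn : 1 ≤ n) :
    ∑ j ∈ Finset.Icc 1 n, (-1 : ℝ) ^ (j - 1) * (n.choose j) * ((j : ℝ) / ((j : ℝ) + 1))
      = 1 / ((n : ℝ) + 1) := by
  have hn1 : ((n : ℝ) + 1) ≠ 0 := by positivity
  have step : ∀ j ∈ Finset.Icc 1 n,
      (-1 : ℝ) ^ (j - 1) * (n.choose j) * ((j : ℝ) / ((j : ℝ) + 1))
      = (-1 : ℝ) ^ (j - 1) * (n.choose j)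
        - (-1 : ℝ) ^ (j - 1) * ((n + 1).choose (j + 1)) / ((n : ℝ) + 1) := by
    intro j hj
    have hj1 : (1 : ℝ) ≤ (j : ℝ) := by exact_mod_cast (Finset.mem_Icc.mp hj).1
    have hjne : ((j : ℝ) + 1) ≠ 0 := by linarith
    have hc : ((n : ℝ) + 1) * (n.choose j) = ((n + 1).choose (j + 1)) * ((j : ℝ) + 1) := by
      exact_mod_cast congrArg (Nat.cast : ℕ → ℝ) (Nat.add_one_mul_choose_eq n j)
    have hC : (n.choose j : ℝ) / ((j : ℝ) + 1) = ((n + 1).choose (j + 1) : ℝ) / ((n : ℝ) + 1) := by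
      rw [div_eq_div_iff hjne hn1]; linarith [hc]
    have h1 : (-1 : ℝ) ^ (j - 1) * (n.choose j) * ((j : ℝ) / ((j : ℝ) + 1))
        = (-1 : ℝ) ^ (j - 1) * (n.choose j)
          - (-1 : ℝ) ^ (j - 1) * ((n.choose j : ℝ) / ((j : ℝ) + 1)) := by
      field_simp; ring
    rw [h1, hC]; ring
  rw [Finset.sum_congr rfl step, Finset.sum_sub_distrib]
  have conv1 : ∑ j ∈ Finset.Icc 1 n, (-1 : ℝ) ^ (j - 1) * (n.choose j) = 1 := by
    rw [← Finset.Ico_add_one_right_eq_Icc, Finset.sum_Ico_eq_sum_range]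
    simp only [Nat.succ_sub_one, Nat.add_sub_cancel]
    refine Eq.trans (Finset.sum_congr rfl fun i _ => ?_)
      (alt_shift (Nat.one_le_iff_ne_zero.mp hn))
    rw [Nat.add_comm 1 i, Nat.add_sub_cancel]
  have conv2 : ∑ j ∈ Finset.Icc 1 n,
      (-1 : ℝ) ^ (j - 1) * ((n + 1).choose (j + 1)) / ((n : ℝ) + 1) = n / ((n : ℝ) + 1) := by
    rw [← Finset.sum_div, ← Finset.Ico_add_one_right_eq_Icc, Finset.sum_Ico_eq_sum_range]
    simp only [Nat.succ_sub_one, Nat.add_sub_cancel]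
    have : ∑ i ∈ range n, (-1 : ℝ) ^ (1 + i - 1) * ((n + 1).choose (1 + i + 1))
        = ∑ i ∈ range n, (-1 : ℝ) ^ i * ((n + 1).choose (i + 2)) := by
      refine Finset.sum_congr rfl fun i _ => ?_
      rw [Nat.add_comm 1 i, Nat.add_sub_cancel, show i + 1 + 1 = i + 2 from rfl]
    rw [this, alt_shift2]
  rw [conv1, conv2]
  field_simp
  ring

lemma expand (n : ℕ) (z : ℝ) (k : ℕ) :
    (-1 : ℝ) ^ k * romanHarmonic n k * z ^ k
      = ∑ j ∈ Finset.Icc 1 n, (-1 : ℝ) ^ (j - 1) * (n.choose j) * (-z / (j : ℝ)) ^ k := by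
  simp only [romanHarmonic, Finset.mul_sum, Finset.sum_mul]
  refine Finset.sum_congr rfl fun j hj => ?_
  have h : (-z / (j : ℝ)) ^ k = (-1 : ℝ) ^ k * z ^ k / (j : ℝ) ^ k := by
    rw [div_pow, neg_pow]
  rw [h]; ring

theorem roman_harmonic_abel_sum (n : ℕ) (hn : 1 ≤ n) :
    (∀ z : ℝ, 0 ≤ z → z < 1 →
        Summable (fun k : ℕ => (-1 : ℝ) ^ k * romanHarmonic n k * z ^ k)) ∧
      Tendsto (fun z : ℝ => ∑' k : ℕ, (-1 : ℝ) ^ k * romanHarmonic n k * z ^ k)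
        (nhdsWithin 1 (Set.Iio 1)) (nhds (1 / ((n : ℝ) + 1))) := by
  have hnorm : ∀ {z : ℝ}, 0 ≤ z → z < 1 → ∀ j ∈ Finset.Icc 1 n, ‖-z / (j : ℝ)‖ < 1 := by
    intro z hz0 hz1 j hj
    have hj1 : (1 : ℝ) ≤ (j : ℝ) := by exact_mod_cast (Finset.mem_Icc.mp hj).1
    have hjpos : (0 : ℝ) < (j : ℝ) := by linarith
    rw [Real.norm_eq_abs, abs_div, abs_neg, abs_of_nonneg hz0, abs_of_pos hjpos]
    calc z / (j : ℝ) ≤ z := div_le_self hz0 hj1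
      _ < 1 := hz1
  have hsum : ∀ {z : ℝ}, 0 ≤ z → z < 1 →
      Summable (fun k : ℕ => (-1 : ℝ) ^ k * romanHarmonic n k * z ^ k) := by
    intro z hz0 hz1
    have : (fun k : ℕ => (-1 : ℝ) ^ k * romanHarmonic n k * z ^ k)
        = fun k => ∑ j ∈ Finset.Icc 1 n,
            (-1 : ℝ) ^ (j - 1) * (n.choose j) * (-z / (j : ℝ)) ^ k := by
      funext k; exact expand n z k
    rw [this]
    exact summable_sum fun j hj =>
      (summable_geometric_of_norm_lt_one (hnorm hz0 hz1 j hj)).mul_left _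
  refine ⟨fun z hz0 hz1 => hsum hz0 hz1, ?_⟩
  have htsum : ∀ {z : ℝ}, 0 ≤ z → z < 1 →
      ∑' k : ℕ, (-1 : ℝ) ^ k * romanHarmonic n k * z ^ k
        = ∑ j ∈ Finset.Icc 1 n,
            (-1 : ℝ) ^ (j - 1) * (n.choose j) * ((j : ℝ) / ((j : ℝ) + z)) := by
    intro z hz0 hz1
    have h1 : ∑' k : ℕ, (-1 : ℝ) ^ k * romanHarmonic n k * z ^ k
        = ∑' k : ℕ, ∑ j ∈ Finset.Icc 1 n,
            (-1 : ℝ) ^ (j - 1) * (n.choose j) * (-z / (j : ℝ)) ^ k :=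
      tsum_congr fun k => expand n z k
    rw [h1, Summable.tsum_finsetSum (fun j hj =>
      (summable_geometric_of_norm_lt_one (hnorm hz0 hz1 j hj)).mul_left _)]
    refine Finset.sum_congr rfl fun j hj => ?_
    have hj1 : (1 : ℝ) ≤ (j : ℝ) := by exact_mod_cast (Finset.mem_Icc.mp hj).1
    have hjne : (j : ℝ) ≠ 0 := by linarith
    have hjzne : (j : ℝ) + z ≠ 0 := by linarith
    rw [tsum_mul_left, tsum_geometric_of_norm_lt_one (hnorm hz0 hz1 j hj)]
    congr 1
    have h2 : (1 : ℝ) - (-z / (j : ℝ)) = ((j : ℝ) + z) / (j : ℝ) := by field_simp; ring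
    rw [h2, inv_div]
  have hg : Tendsto (fun z : ℝ => ∑ j ∈ Finset.Icc 1 n,
      (-1 : ℝ) ^ (j - 1) * (n.choose j) * ((j : ℝ) / ((j : ℝ) + z)))
      (nhdsWithin 1 (Set.Iio 1)) (nhds (1 / ((n : ℝ) + 1))) := by
    rw [← key_sum n hn]
    refine tendsto_finset_sum _ fun j hj => ?_
    have hj1 : (1 : ℝ) ≤ (j : ℝ) := by exact_mod_cast (Finset.mem_Icc.mp hj).1
    have hne : ((j : ℝ) + 1) ≠ 0 := by linarith
    have hca : ContinuousAt (fun z : ℝ =>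
        (-1 : ℝ) ^ (j - 1) * (n.choose j) * ((j : ℝ) / ((j : ℝ) + z))) 1 :=
      continuousAt_const.mul (continuousAt_const.div
        (continuousAt_const.add continuousAt_id) hne)
    exact hca.tendsto.mono_left nhdsWithin_le_nhds
  refine Tendsto.congr' ?_ hg
  filter_upwards [Ioo_mem_nhdsLT_of_mem (Set.mem_Ioc.mpr ⟨zero_lt_one, le_refl (1 : ℝ)⟩)]
    with z hz
  exact (htsum hz.1.le hz.2).symm
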